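/- Let d be a positive integer such that for every Γ-stable subset I of Ĝ, the monoid B(Ĝ)_I is contained in the ℤ-span of its elements of length at most d. Then the separating Noether number of G over F is at most d: every finite dimensional FG-module has its orbits separated by invariants of degree at most d. -/

import Mathlib

open MvPolynomial

/-- The action of the Galois group on characters : `(γ · χ)(g) = γ(χ(g))`. -/
def galChar {F K G : Type*} [Field F] [Field K] [Algebra F K] [Group G]
    (γ : K ≃ₐ[F] K) (χ : G →* Kˣ) : G →* Kˣ :=
  (Units.map (γ : K →* K)).comp χ

/-- A `ℕ`-valued sequence viewed as a `ℤ`-valued one. -/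
noncomputable def natToZ {α : Type*} (m : α →₀ ℕ) : α →₀ ℤ :=
  m.mapRange (Nat.cast : ℕ → ℤ) Nat.cast_zero

namespace SepAux

/-- evaluation at a group element, as a monoid hom on characters -/
def evalAt {G K : Type*} [CommGroup G] [Field K] (g : G) : (G →* Kˣ) →* Kˣ where
  toFun χ := χ g
  map_one' := rfl
  map_mul' _ _ := rfl

lemma sum_hom_eq_zero {A : Type*} [CommGroup A] [Fintype A] {K : Type*} [Field K]
    (φ : A →* Kˣ) (h : ∃ a, φ a ≠ 1) : ∑ a : A, ((φ a : K)) = 0 := by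
  obtain ⟨a0, h0⟩ := h
  have key : ((φ a0 : K)) * ∑ a : A, ((φ a : K)) = ∑ a : A, ((φ a : K)) := by
    rw [Finset.mul_sum]
    refine Fintype.sum_equiv (Equiv.mulLeft a0) _ _ fun a => ?_
    simp [← Units.val_mul, ← map_mul]
  have h1 : ((φ a0 : K)) ≠ 1 := by
    intro hc; exact h0 (Units.ext hc)
  by_contra hS
  exact h1 (mul_right_cancel₀ hS (key.trans (one_mul _).symm))

/-- a linear form as a multivariate polynomial -/
noncomputable def linForm {K : Type*} [CommSemiring K] {n : ℕ} (a : Fin n → K) :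
    MvPolynomial (Fin n) K := ∑ j, C (a j) * X j

lemma eval_linForm {K : Type*} [CommSemiring K] {n : ℕ} (a u : Fin n → K) :
    eval u (linForm a) = ∑ j, a j * u j := by
  simp [linForm]

lemma totalDegree_linForm {K : Type*} [CommSemiring K] {n : ℕ} (a : Fin n → K) :
    (linForm a).totalDegree ≤ 1 := by
  refine (totalDegree_finset_sum _ _).trans ?_
  refine Finset.sup_le fun j _ => ?_
  refine (totalDegree_mul _ _).trans ?_
  have : (X j : MvPolynomial (Fin n) K).totalDegree ≤ 1 := by
    by_cases hK : Nontrivial K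
    · exact le_of_eq (totalDegree_X j)
    · rw [not_nontrivial_iff_subsingleton] at hK
      have : (X j : MvPolynomial (Fin n) K) = 0 := Subsingleton.elim _ _
      simp [this]
  simpa [totalDegree_C] using this

lemma sum_mulVec {K : Type*} [CommRing K] {n : ℕ} {ι : Type*} (s : Finset ι)
    (A : ι → Matrix (Fin n) (Fin n) K) (x : Fin n → K) :
    (∑ i ∈ s, A i).mulVec x = ∑ i ∈ s, (A i).mulVec x := by
  ext r
  simp [Matrix.mulVec, dotProduct, Finset.sum_apply, Matrix.sum_apply, Finset.sum_mul]
  rw [Finset.sum_comm]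

lemma mulVec_map {F K : Type*} [CommRing F] [CommRing K] (f : F →+* K) {n : ℕ}
    (A : Matrix (Fin n) (Fin n) F) (x : Fin n → F) :
    (A.map f).mulVec (fun j => f (x j)) = fun r => f (A.mulVec x r) := by
  ext r
  simp [Matrix.mulVec, dotProduct, Matrix.map_apply, ← map_mul, map_sum]

lemma finsupp_split {α : Type*} [DecidableEq α] (m : α →₀ ℕ) (χ : α) (h : m χ ≠ 0) :
    (m - Finsupp.single χ 1) + Finsupp.single χ 1 = m := by
  ext ψ
  simp only [Finsupp.add_apply, Finsupp.tsub_apply, Finsupp.single_apply]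
  by_cases hc : χ = ψ
  · subst hc; simp; omega
  · simp [hc]

lemma finsupp_split_supp {α : Type*} [DecidableEq α] (m : α →₀ ℕ) (χ : α) :
    (m - Finsupp.single χ 1).support ⊆ m.support := by
  intro ψ hψ
  rw [Finsupp.mem_support_iff] at hψ ⊢
  intro hc
  apply hψ
  simp [Finsupp.tsub_apply, hc]

lemma finsupp_split_prod {α β : Type*} [DecidableEq α] [CommMonoid β] (m : α →₀ ℕ) (χ : α)
    (h : m χ ≠ 0) (f : α → ℕ → β) (h0 : ∀ a, f a 0 = 1)
    (hadd : ∀ a k l, f a (k + l) = f a k * f a l) :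
    m.prod f = (m - Finsupp.single χ 1).prod f * f χ 1 := by
  conv_lhs => rw [← finsupp_split m χ h]
  rw [Finsupp.prod_add_index' h0 hadd, Finsupp.prod_single_index (h0 χ)]

lemma finsupp_split_sum {α : Type*} [DecidableEq α] (m : α →₀ ℕ) (χ : α) (h : m χ ≠ 0) :
    ((m - Finsupp.single χ 1).sum fun _ k => k) + 1 = m.sum fun _ k => k := by
  conv_rhs => rw [← finsupp_split m χ h]
  rw [Finsupp.sum_add_index' (fun _ => rfl) (fun _ _ _ => rfl),
    Finsupp.sum_single_index rfl]

end SepAux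

namespace SepAuxB

variable {G K : Type*} [CommGroup G] [Fintype G] [Field K] {n : ℕ}

/-- the isotypic projector attached to a character -/
noncomputable def projE [Fintype (G →* Kˣ)] (N : G →* Matrix (Fin n) (Fin n) K)
    (χ : G →* Kˣ) : Matrix (Fin n) (Fin n) K :=
  (Fintype.card (G →* Kˣ) : K)⁻¹ • ∑ h : G, ((χ h : K))⁻¹ • N h

lemma mul_projE [Fintype (G →* Kˣ)] (N : G →* Matrix (Fin n) (Fin n) K)
    (χ : G →* Kˣ) (g : G) :
    N g * projE N χ = (χ g : K) • projE N χ := by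
  unfold projE
  rw [Matrix.mul_smul, Matrix.mul_sum, smul_comm]
  congr 1
  rw [Finset.smul_sum]
  refine Fintype.sum_equiv (Equiv.mulLeft g) _ _ fun h => ?_
  rw [smul_smul, Matrix.mul_smul, ← map_mul, Equiv.coe_mulLeft]
  congr 1
  have : (χ (g * h) : K) = (χ g : K) * (χ h : K) := by
    rw [← Units.val_mul, ← map_mul]
  rw [this, mul_inv]
  field_simp

lemma projE_mul [Fintype (G →* Kˣ)] (N : G →* Matrix (Fin n) (Fin n) K)
    (χ : G →* Kˣ) (g : G) :
    projE N χ * N g = N g * projE N χ := by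
  unfold projE
  rw [Matrix.smul_mul, Matrix.mul_smul, Matrix.sum_mul, Matrix.mul_sum]
  congr 1
  refine Finset.sum_congr rfl fun h _ => ?_
  rw [Matrix.smul_mul, Matrix.mul_smul, ← map_mul, ← map_mul, mul_comm]

lemma sum_projE [Fintype (G →* Kˣ)] (N : G →* Matrix (Fin n) (Fin n) K)
    (hcard : (Fintype.card (G →* Kˣ) : K) ≠ 0)
    (horth : ∀ h : G, h ≠ 1 → ∑ χ : G →* Kˣ, ((χ h : K)) = 0) :
    ∑ χ : G →* Kˣ, projE N χ = 1 := by
  classical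
  unfold projE
  rw [← Finset.smul_sum, Finset.sum_comm]
  have key : ∀ h : G, ∑ χ : G →* Kˣ, ((χ h : K))⁻¹ • N h
      = (if h = 1 then (Fintype.card (G →* Kˣ) : K) • N h else 0) := by
    intro h
    rw [← Finset.sum_smul]
    by_cases hh : h = 1
    · subst hh; simp
    · rw [if_neg hh]
      have : ∑ χ : G →* Kˣ, ((χ h : K))⁻¹ = ∑ χ : G →* Kˣ, ((χ h⁻¹ : K)) := by
        refine Finset.sum_congr rfl fun χ _ => ?_
        rw [map_inv]
        simp
      rw [this, horth h⁻¹ (by simpa using hh), zero_smul]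
  rw [Finset.sum_congr rfl fun h _ => key h, Finset.sum_ite_eq' Finset.univ (1 : G)
    (fun h => (Fintype.card (G →* Kˣ) : K) • N h)]
  simp [smul_smul, inv_mul_cancel₀ hcard]

end SepAuxB


namespace SepAuxC

lemma descent {F K : Type*} [Field F] [Field K] [Algebra F K] [FiniteDimensional F K]
    {n d : ℕ} {ι : Type*} (A : ι → Matrix (Fin n) (Fin n) F) (v w : Fin n → F)
    (hsep : ∀ f : MvPolynomial (Fin n) F, (∀ i (u : Fin n → F), eval ((A i).mulVec u) f = eval u f) →
      f.totalDegree ≤ d → eval v f = eval w f)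
    (fK : MvPolynomial (Fin n) K)
    (hinv : ∀ i (u : Fin n → K), eval (((A i).map (algebraMap F K)).mulVec u) fK = eval u fK)
    (hdeg : fK.totalDegree ≤ d) :
    eval (fun j => algebraMap F K (v j)) fK = eval (fun j => algebraMap F K (w j)) fK := by
  classical
  set b := Module.finBasis F K with hb
  set ft : Fin (Module.finrank F K) → MvPolynomial (Fin n) F :=
    fun t => ∑ m ∈ fK.support, monomial m (b.repr (coeff m fK) t) with hft
  have heval_ft : ∀ (t) (u : Fin n → F),
      eval u (ft t) = ∑ m ∈ fK.support, (b.repr (coeff m fK) t) * ∏ i, (u i) ^ m i := by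
    intro t u
    rw [hft]
    simp only [map_sum, eval_monomial]
    exact Finset.sum_congr rfl fun m _ => by rw [Finsupp.prod_pow]
  -- reconstruction of evaluations at F-points
  have hre : ∀ u : Fin n → F,
      eval (fun j => algebraMap F K (u j)) fK = ∑ t, (eval u (ft t)) • b t := by
    intro u
    rw [eval_eq']
    have step : ∀ m : Fin n →₀ ℕ,
        coeff m fK * ∏ i, (algebraMap F K (u i)) ^ m i
        = ∑ t, ((b.repr (coeff m fK) t) * ∏ i, (u i) ^ m i) • b t := by
      intro m
      conv_lhs => rw [← Module.Basis.sum_repr b (coeff m fK)]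
      rw [Finset.sum_mul]
      refine Finset.sum_congr rfl fun t _ => ?_
      have : ∏ i, (algebraMap F K (u i)) ^ m i
          = algebraMap F K (∏ i, (u i) ^ m i) := by
        rw [map_prod]
        exact Finset.prod_congr rfl fun j _ => by rw [map_pow]
      rw [this, Algebra.smul_def, Algebra.smul_def, map_mul]
      ring
    rw [Finset.sum_congr rfl fun m _ => step m, Finset.sum_comm]
    refine Finset.sum_congr rfl fun t _ => ?_
    rw [← Finset.sum_smul, heval_ft]
  -- invariance of the components
  have hinvF : ∀ t, ∀ i (u : Fin n → F), eval ((A i).mulVec u) (ft t) = eval u (ft t) := by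
    intro t i u
    have h1 : ∑ s, (eval ((A i).mulVec u) (ft s)) • b s = ∑ s, (eval u (ft s)) • b s := by
      rw [← hre, ← hre]
      have hmv : (fun j => algebraMap F K ((A i).mulVec u j))
          = ((A i).map (algebraMap F K)).mulVec (fun j => algebraMap F K (u j)) :=
        (SepAux.mulVec_map (algebraMap F K) (A i) u).symm
      rw [hmv, hinv]
    have h2 : b.equivFun.symm (fun s => eval ((A i).mulVec u) (ft s))
        = b.equivFun.symm (fun s => eval u (ft s)) := by
      rw [Module.Basis.equivFun_symm_apply, Module.Basis.equivFun_symm_apply]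
      exact h1
    have := b.equivFun.symm.injective h2
    exact congrFun this t
  -- degree bound for the components
  have hdegF : ∀ t, (ft t).totalDegree ≤ d := by
    intro t
    refine le_trans ?_ hdeg
    rw [hft]
    refine (totalDegree_finset_sum _ _).trans ?_
    refine Finset.sup_le fun m hm => ?_
    by_cases hc : (b.repr (coeff m fK) t) = 0
    · simp [hc]
    · rw [totalDegree_monomial m hc]
      exact Finset.le_sup (f := fun m : Fin n →₀ ℕ => m.sum fun _ e => e) hm
  rw [hre, hre]
  exact Finset.sum_congr rfl fun t _ => by rw [hsep (ft t) (hinvF t) (hdegF t)]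

end SepAuxC


namespace SepAuxD
open SepAux SepAuxB

variable {G K : Type*} [CommGroup G] [Fintype G] [Field K] {n : ℕ} [Fintype (G →* Kˣ)]

lemma eval_linForm_row (N : G →* Matrix (Fin n) (Fin n) K) (χ : G →* Kˣ) (q : Fin n)
    (u : Fin n → K) :
    eval u (linForm (fun j => projE N χ q j)) = (projE N χ).mulVec u q := by
  rw [eval_linForm]
  simp [Matrix.mulVec, dotProduct]

lemma eval_linForm_row_mulVec (N : G →* Matrix (Fin n) (Fin n) K) (χ : G →* Kˣ) (q : Fin n)
    (g : G) (u : Fin n → K) :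
    eval ((N g).mulVec u) (linForm (fun j => projE N χ q j))
      = (χ g : K) * eval u (linForm (fun j => projE N χ q j)) := by
  rw [eval_linForm_row, eval_linForm_row, Matrix.mulVec_mulVec, projE_mul, mul_projE,
    Matrix.smul_mulVec]
  simp

lemma key1 {d : ℕ} (N : G →* Matrix (Fin n) (Fin n) K) (x y : Fin n → K)
    (heq : ∀ fK : MvPolynomial (Fin n) K,
      (∀ g (u : Fin n → K), eval ((N g).mulVec u) fK = eval u fK) →
      fK.totalDegree ≤ d → eval x fK = eval y fK)
    (χ0 : G →* Kˣ) (r : Fin n) (m' : (G →* Kˣ) →₀ ℕ) (i : (G →* Kˣ) → Fin n)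
    (hchar : χ0 * m'.prod (fun ψ k => ψ ^ k) = 1)
    (hlen : (m'.sum fun _ k => k) + 1 ≤ d) :
    ((projE N χ0).mulVec x r) * m'.prod (fun ψ k => ((projE N ψ).mulVec x (i ψ)) ^ k)
    = ((projE N χ0).mulVec y r) * m'.prod (fun ψ k => ((projE N ψ).mulVec y (i ψ)) ^ k) := by
  classical
  set fK := linForm (fun j => projE N χ0 r j)
      * m'.prod (fun ψ k => (linForm (fun j => projE N ψ (i ψ) j)) ^ k) with hfK
  have hinv : ∀ g (u : Fin n → K), eval ((N g).mulVec u) fK = eval u fK := by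
    intro g u
    have hsc : (χ0 g : K) * ∏ ψ ∈ m'.support, ((ψ g : K)) ^ m' ψ = 1 := by
      have := congrArg ((Units.coeHom K).comp (evalAt g)) hchar
      rw [map_mul, map_one, map_finsuppProd] at this
      simp only [MonoidHom.comp_apply] at this
      exact this
    rw [hfK, map_mul, map_mul, map_finsuppProd, map_finsuppProd]
    simp only [map_pow]
    rw [eval_linForm_row_mulVec]
    simp only [Finsupp.prod]
    have hprod : ∏ ψ ∈ m'.support,
        (eval ((N g).mulVec u) (linForm (fun j => projE N ψ (i ψ) j))) ^ m' ψ
        = (∏ ψ ∈ m'.support, ((ψ g : K)) ^ m' ψ)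
          * ∏ ψ ∈ m'.support, (eval u (linForm (fun j => projE N ψ (i ψ) j))) ^ m' ψ := by
      rw [← Finset.prod_mul_distrib]
      exact Finset.prod_congr rfl fun ψ _ => by rw [eval_linForm_row_mulVec, mul_pow]
    rw [hprod]
    have habcd : ∀ a b c e : K, a * c = 1 → (a * b) * (c * e) = b * e := by
      intro a b c e h
      calc (a*b)*(c*e) = (a*c)*(b*e) := by ring
        _ = b*e := by rw [h, one_mul]
    exact habcd _ _ _ _ hsc
  have hdeg : fK.totalDegree ≤ d := by
    rw [hfK]
    refine (totalDegree_mul _ _).trans ?_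
    have h1 := totalDegree_linForm (fun j => projE N χ0 r j)
    have h2 : (m'.prod fun ψ k => (linForm fun j => projE N ψ (i ψ) j) ^ k).totalDegree
        ≤ m'.sum fun _ k => k := by
      rw [Finsupp.prod]
      refine (totalDegree_finset_prod _ _).trans ?_
      rw [Finsupp.sum]
      refine Finset.sum_le_sum fun ψ _ => ?_
      refine (totalDegree_pow _ _).trans ?_
      calc m' ψ * (linForm fun j => projE N ψ (i ψ) j).totalDegree
          ≤ m' ψ * 1 := Nat.mul_le_mul_left _ (totalDegree_linForm _)
        _ = m' ψ := mul_one _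
    exact le_trans (add_le_add h1 h2) (by omega)
  have hx := heq fK hinv hdeg
  rw [hfK, map_mul, map_mul, map_finsuppProd, map_finsuppProd] at hx
  simp only [map_pow, eval_linForm_row] at hx
  exact hx

end SepAuxD


set_option maxHeartbeats 2000000 in
theorem sepNoetherNumber_le_of_block_monoid_condition
    {G : Type*} [CommGroup G] [Fintype G]
    {F K : Type*} [Field F] [Field K] [Algebra F K]
    (hchar : (Fintype.card G : F) ≠ 0)
    (ω : K) (hω : orderOf ω = Monoid.exponent G)
    (hK : IntermediateField.adjoin F {ω} = ⊤)
    (d : ℕ) (hd : 0 < d)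
    (hcond : ∀ I : Set (G →* Kˣ),
      (∀ (γ : K ≃ₐ[F] K) (ψ : G →* Kˣ), ψ ∈ I → galChar γ ψ ∈ I) →
      ∀ s : (G →* Kˣ) →₀ ℕ, s.prod (fun ψ k => ψ ^ k) = 1 →
        (∀ ψ : G →* Kˣ, ψ ∉ I → s ψ = 0) →
        natToZ s ∈ Submodule.span ℤ
          (natToZ '' {m : (G →* Kˣ) →₀ ℕ | m.prod (fun ψ k => ψ ^ k) = 1 ∧
            (∀ ψ : G →* Kˣ, ψ ∉ I → m ψ = 0) ∧ m.sum (fun _ k => k) ≤ d})) :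
    ∀ (n : ℕ) (ρ : G →* Matrix (Fin n) (Fin n) F) (v w : Fin n → F),
      (¬ ∃ g : G, (ρ g).mulVec v = w) →
      ∃ f : MvPolynomial (Fin n) F,
        (∀ (g : G) (u : Fin n → F), eval ((ρ g).mulVec u) f = eval u f) ∧
        f.totalDegree ≤ d ∧ eval v f ≠ eval w f := by
  classical
  intro n ρ v w hno
  by_contra hex
  push_neg at hex
  rcases Nat.eq_zero_or_pos n with hn0 | hn0
  · subst hn0
    exact hno ⟨1, by funext r; exact r.elim0⟩
  haveI : Inhabited (Fin n) := ⟨⟨0, hn0⟩⟩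
  -- the exponent and roots of unity
  have hepos : 0 < Monoid.exponent G := Monoid.ExponentExists.of_finite.exponent_pos
  haveI : NeZero (Monoid.exponent G) := ⟨hepos.ne'⟩
  have hprim : IsPrimitiveRoot ω (Monoid.exponent G) := hω ▸ IsPrimitiveRoot.orderOf ω
  haveI hRoU : HasEnoughRootsOfUnity K (Monoid.exponent G) := ⟨⟨ω, hprim⟩, inferInstance⟩
  obtain ⟨eqv⟩ := CommGroup.monoidHom_mulEquiv_of_hasEnoughRootsOfUnity G K
  haveI : Finite (G →* Kˣ) := Finite.of_equiv G eqv.toEquiv.symm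
  haveI : Fintype (G →* Kˣ) := Fintype.ofFinite _
  have halginj : Function.Injective (algebraMap F K) := (algebraMap F K).injective
  have hcardG : (Fintype.card (G →* Kˣ) : K) ≠ 0 := by
    have h1 : Fintype.card (G →* Kˣ) = Fintype.card G := Fintype.card_congr eqv.toEquiv
    rw [h1, ← map_natCast (algebraMap F K) (Fintype.card G)]
    intro hc
    exact hchar (halginj (by simpa using hc))
  -- ω as a unit
  have hωunit : IsUnit ω := hprim.isUnit hepos.ne'
  set ωu : Kˣ := hωunit.unit with hωu_def
  have hωu : (ωu : K) = ω := hωunit.unit_spec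
  have hordωu : orderOf ωu = Monoid.exponent G := by
    rw [← orderOf_units, hωu, hω]
  have hωue : ωu ^ Monoid.exponent G = 1 := by
    rw [← hordωu]; exact pow_orderOf_eq_one _
  have hroot : ∀ x : Kˣ, x ^ Monoid.exponent G = 1 → x ∈ Subgroup.zpowers ωu := by
    intro x hx
    have hxK : (x : K) ^ Monoid.exponent G = 1 := by
      rw [← Units.val_pow_eq_pow_val, hx, Units.val_one]
    obtain ⟨i, _, hix⟩ := hprim.eq_pow_of_pow_eq_one hxK
    refine Subgroup.mem_zpowers_iff.mpr ⟨(i : ℤ), Units.ext ?_⟩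
    rw [zpow_natCast, Units.val_pow_eq_pow_val, hωu, hix]
  have hvalpow : ∀ (χ : G →* Kˣ) (g : G), χ g ^ Monoid.exponent G = 1 := by
    intro χ g
    rw [← map_pow, Monoid.pow_exponent_eq_one, map_one]
  have hcharpow : ∀ χ : G →* Kˣ, χ ^ Monoid.exponent G = 1 := by
    intro χ
    ext g
    exact congrArg Units.val (hvalpow χ g)
  -- finite dimensionality
  have hint : IsIntegral F ω := by
    refine ⟨Polynomial.X ^ Monoid.exponent G - Polynomial.C 1,
      Polynomial.monic_X_pow_sub_C 1 hepos.ne', ?_⟩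
    simp [hprim.pow_eq_one]
  haveI : FiniteDimensional F K := by
    have h1 : FiniteDimensional F (IntermediateField.adjoin F {ω}) :=
      IntermediateField.adjoin.finiteDimensional hint
    rw [hK] at h1
    exact (IntermediateField.topEquiv (F := F) (E := K)).toLinearEquiv.finiteDimensional
  -- matrices over K
  set Mh : G →* Matrix (Fin n) (Fin n) K :=
    ((algebraMap F K).mapMatrix.toMonoidHom.comp ρ) with hMh
  have hMhg : ∀ g, Mh g = (ρ g).map (algebraMap F K) := by
    intro g; rw [hMh]; rfl
  set E := SepAuxB.projE Mh with hE
  have horth : ∀ h : G, h ≠ 1 → ∑ χ : G →* Kˣ, ((χ h : K)) = 0 := by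
    intro h hh
    obtain ⟨φ, hφ⟩ := CommGroup.exists_apply_ne_one_of_hasEnoughRootsOfUnity G K hh
    exact SepAux.sum_hom_eq_zero (SepAux.evalAt h) ⟨φ, hφ⟩
  have hsumE : ∑ χ : G →* Kˣ, E χ = 1 := SepAuxB.sum_projE Mh hcardG horth
  have heqK : ∀ fK : MvPolynomial (Fin n) K,
      (∀ g (u : Fin n → K), eval ((Mh g).mulVec u) fK = eval u fK) →
      fK.totalDegree ≤ d →
      eval (fun j => algebraMap F K (v j)) fK = eval (fun j => algebraMap F K (w j)) fK := by
    intro fK hi hdg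
    refine SepAuxC.descent (fun g : G => ρ g) v w hex fK ?_ hdg
    intro g u
    rw [← hMhg]
    exact hi g u
  -- explicit formula for the isotypic components of F-rational vectors
  have hformula : ∀ (χ : G →* Kˣ) (u : Fin n → F) (r : Fin n),
      (E χ).mulVec (fun j => algebraMap F K (u j)) r
      = (Fintype.card (G →* Kˣ) : K)⁻¹ *
          ∑ h : G, ((χ h : K))⁻¹ * algebraMap F K ((ρ h).mulVec u r) := by
    intro χ u r
    rw [hE]
    simp only [SepAuxB.projE]
    rw [Matrix.smul_mulVec, SepAux.sum_mulVec, Pi.smul_apply, smul_eq_mul]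
    congr 1
    rw [Finset.sum_apply]
    refine Finset.sum_congr rfl fun h _ => ?_
    rw [Matrix.smul_mulVec, Pi.smul_apply, smul_eq_mul]
    congr 1
    rw [hMhg]
    exact congrFun (SepAux.mulVec_map (algebraMap F K) (ρ h) u) r
  have hgalval : ∀ (γ : K ≃ₐ[F] K) (χ : G →* Kˣ) (h : G),
      γ ((χ h : K)) = ((galChar γ χ h : K)) := by
    intro γ χ h
    simp [galChar]
  have hGal : ∀ (γ : K ≃ₐ[F] K) (χ : G →* Kˣ) (u : Fin n → F) (r : Fin n),
      γ ((E χ).mulVec (fun j => algebraMap F K (u j)) r)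
      = (E (galChar γ χ)).mulVec (fun j => algebraMap F K (u j)) r := by
    intro γ χ u r
    rw [hformula, hformula, map_mul, map_inv₀, map_natCast, map_sum]
    congr 1
    refine Finset.sum_congr rfl fun h _ => ?_
    rw [map_mul, map_inv₀, hgalval, AlgEquiv.commutes]
  have hstab : ∀ (u : Fin n → F) (γ : K ≃ₐ[F] K) (ψ : G →* Kˣ),
      ψ ∈ {χ : G →* Kˣ | (E χ).mulVec (fun j => algebraMap F K (u j)) ≠ 0} →
      galChar γ ψ ∈ {χ : G →* Kˣ | (E χ).mulVec (fun j => algebraMap F K (u j)) ≠ 0} := by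
    intro u γ ψ hψ
    simp only [Set.mem_setOf_eq] at hψ ⊢
    intro hc
    apply hψ
    funext r
    simp only [Pi.zero_apply]
    apply γ.injective
    rw [map_zero, hGal γ ψ u r, hc]
    rfl
  have hwit : ∀ (u : Fin n → F) (χ : G →* Kˣ),
      (E χ).mulVec (fun j => algebraMap F K (u j)) ≠ 0 →
      ∃ m : (G →* Kˣ) →₀ ℕ, m.prod (fun ψ k => ψ ^ k) = 1 ∧
        (∀ ψ : G →* Kˣ,
          ψ ∉ {χ' : G →* Kˣ | (E χ').mulVec (fun j => algebraMap F K (u j)) ≠ 0} → m ψ = 0) ∧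
        (m.sum fun _ k => k) ≤ d ∧ m χ ≠ 0 := by
    intro u χ hχ
    have hspan := hcond {χ' : G →* Kˣ | (E χ').mulVec (fun j => algebraMap F K (u j)) ≠ 0}
      (hstab u) (Finsupp.single χ (Monoid.exponent G))
      (by rw [Finsupp.prod_single_index (by exact pow_zero χ)]; exact hcharpow χ)
      (by intro ψ hψ
          rw [Finsupp.single_apply]
          rw [if_neg]
          intro hcc
          exact hψ (by rw [← hcc]; exact hχ))
    by_contra hcon
    push_neg at hcon
    have hle : Submodule.span ℤ (natToZ '' {m : (G →* Kˣ) →₀ ℕ | m.prod (fun ψ k => ψ ^ k) = 1 ∧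
        (∀ ψ : G →* Kˣ,
          ψ ∉ {χ' : G →* Kˣ | (E χ').mulVec (fun j => algebraMap F K (u j)) ≠ 0} → m ψ = 0) ∧
        m.sum (fun _ k => k) ≤ d})
        ≤ LinearMap.ker (Finsupp.lapply (M := ℤ) (R := ℤ) χ) := by
      refine Submodule.span_le.mpr ?_
      rintro z ⟨m, hm, rfl⟩
      have hz := hcon m hm.1 hm.2.1 hm.2.2
      simp only [SetLike.mem_coe, LinearMap.mem_ker, Finsupp.lapply_apply, natToZ,
        Finsupp.mapRange_apply, hz, Nat.cast_zero]
    have hmem := hle hspan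
    simp only [SetLike.mem_coe, LinearMap.mem_ker, Finsupp.lapply_apply, natToZ,
      Finsupp.mapRange_apply, Finsupp.single_eq_same] at hmem
    exact hepos.ne' (by exact_mod_cast hmem)
  -- the core cross-multiplication step
  have step : ∀ (x y : Fin n → F),
      (∀ fK : MvPolynomial (Fin n) K,
        (∀ g (u : Fin n → K), eval ((Mh g).mulVec u) fK = eval u fK) → fK.totalDegree ≤ d →
        eval (fun j => algebraMap F K (x j)) fK = eval (fun j => algebraMap F K (y j)) fK) →
      ∀ χ : G →* Kˣ, (E χ).mulVec (fun j => algebraMap F K (x j)) ≠ 0 →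
      ∃ i0 : Fin n,
        (E χ).mulVec (fun j => algebraMap F K (x j)) i0 ≠ 0 ∧
        (E χ).mulVec (fun j => algebraMap F K (y j)) i0 ≠ 0 ∧
        (∀ r, (E χ).mulVec (fun j => algebraMap F K (y j)) r
              * (E χ).mulVec (fun j => algebraMap F K (x j)) i0
            = (E χ).mulVec (fun j => algebraMap F K (y j)) i0
              * (E χ).mulVec (fun j => algebraMap F K (x j)) r) := by
    intro x y hxy χ hχ
    set x' := fun j => algebraMap F K (x j) with hx'
    set y' := fun j => algebraMap F K (y j) with hy'
    have hch : ∀ ψ : G →* Kˣ, ∃ i : Fin n,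
        ((E ψ).mulVec x' ≠ 0 → (E ψ).mulVec x' i ≠ 0) := by
      intro ψ
      by_cases h : (E ψ).mulVec x' ≠ 0
      · obtain ⟨i, hi⟩ := Function.ne_iff.mp h
        exact ⟨i, fun _ => hi⟩
      · exact ⟨default, fun hc => absurd hc h⟩
    choose i0 hi0 using hch
    obtain ⟨m, hm1, hm2, hm3, hm4⟩ := hwit x χ hχ
    set m' := m - Finsupp.single χ 1 with hm'def
    have hcharm : χ * m'.prod (fun ψ k => ψ ^ k) = 1 := by
      have h2 := SepAux.finsupp_split_prod m χ hm4 (fun ψ k => ψ ^ k)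
        (fun a => pow_zero a) (fun a k l => pow_add a k l)
      rw [hm1, ← hm'def] at h2
      have h3 : (m'.prod fun ψ k => ψ ^ k) * χ = 1 := by
        have h4 := h2.symm
        rw [show χ ^ 1 = χ by ext g; simp] at h4
        simpa using h4
      exact (mul_comm χ (m'.prod fun ψ k => ψ ^ k)).trans h3
    have hlenm : (m'.sum fun _ k => k) + 1 ≤ d := by
      have := SepAux.finsupp_split_sum m χ hm4
      rw [← hm'def] at this
      omega
    have e_at : ∀ r, (E χ).mulVec x' r * m'.prod (fun ψ k => (E ψ).mulVec x' (i0 ψ) ^ k)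
        = (E χ).mulVec y' r * m'.prod (fun ψ k => (E ψ).mulVec y' (i0 ψ) ^ k) :=
      fun r => SepAuxD.key1 Mh x' y' hxy χ r m' i0 hcharm hlenm
    set Ax := m'.prod (fun ψ k => (E ψ).mulVec x' (i0 ψ) ^ k) with hAx
    set Ay := m'.prod (fun ψ k => (E ψ).mulVec y' (i0 ψ) ^ k) with hAy
    have hA : Ax ≠ 0 := by
      rw [hAx, Finsupp.prod]
      refine Finset.prod_ne_zero_iff.mpr fun ψ hψ => ?_
      refine pow_ne_zero _ ?_
      apply hi0 ψ
      have hsupp : ψ ∈ m.support := SepAux.finsupp_split_supp m χ (hm'def ▸ hψ)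
      rw [Finsupp.mem_support_iff] at hsupp
      by_contra hc
      exact hsupp (hm2 ψ (by simpa using hc))
    have hxi0 : (E χ).mulVec x' (i0 χ) ≠ 0 := hi0 χ hχ
    have e_i0 := e_at (i0 χ)
    have hrhs : (E χ).mulVec y' (i0 χ) * Ay ≠ 0 := by
      rw [← e_i0]; exact mul_ne_zero hxi0 hA
    have hyi0 : (E χ).mulVec y' (i0 χ) ≠ 0 := left_ne_zero_of_mul hrhs
    refine ⟨i0 χ, hxi0, hyi0, fun r => ?_⟩
    apply mul_right_cancel₀ hA
    calc (E χ).mulVec y' r * (E χ).mulVec x' (i0 χ) * Ax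
        = (E χ).mulVec y' r * ((E χ).mulVec x' (i0 χ) * Ax) := by ring
      _ = (E χ).mulVec y' r * ((E χ).mulVec y' (i0 χ) * Ay) := by rw [e_i0]
      _ = (E χ).mulVec y' (i0 χ) * ((E χ).mulVec y' r * Ay) := by ring
      _ = (E χ).mulVec y' (i0 χ) * ((E χ).mulVec x' r * Ax) := by rw [e_at r]
      _ = (E χ).mulVec y' (i0 χ) * (E χ).mulVec x' r * Ax := by ring
  -- fix the pair (v, w)
  have heqK' : ∀ fK : MvPolynomial (Fin n) K,
      (∀ g (u : Fin n → K), eval ((Mh g).mulVec u) fK = eval u fK) → fK.totalDegree ≤ d →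
      eval (fun j => algebraMap F K (w j)) fK = eval (fun j => algebraMap F K (v j)) fK :=
    fun fK hi hdg => (heqK fK hi hdg).symm
  have stepv := step v w heqK
  have stepw := step w v heqK'
  set v' := fun j => algebraMap F K (v j) with hv'
  set w' := fun j => algebraMap F K (w j) with hw'
  set I : Set (G →* Kˣ) := {χ | (E χ).mulVec v' ≠ 0} with hI
  have hdata : ∀ χ : G →* Kˣ, ∃ i0 : Fin n,
      (χ ∈ I → ((E χ).mulVec v' i0 ≠ 0 ∧ (E χ).mulVec w' i0 ≠ 0 ∧
        (∀ r, (E χ).mulVec w' r * (E χ).mulVec v' i0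
            = (E χ).mulVec w' i0 * (E χ).mulVec v' r))) := by
    intro χ
    by_cases h : χ ∈ I
    · obtain ⟨i0, h1, h2, h3⟩ := stepv χ h
      exact ⟨i0, fun _ => ⟨h1, h2, h3⟩⟩
    · exact ⟨default, fun hc => absurd hc h⟩
  choose i0 hdata using hdata
  set xu : (G →* Kˣ) → Kˣ := fun χ =>
    if h : χ ∈ I then
      (Units.mk0 _ ((hdata χ h).2.1)) * (Units.mk0 _ ((hdata χ h).1))⁻¹
    else 1 with hxu
  have hxuval : ∀ (χ : G →* Kˣ) (h : χ ∈ I),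
      (xu χ : K) = (E χ).mulVec w' (i0 χ) * ((E χ).mulVec v' (i0 χ))⁻¹ := by
    intro χ h
    simp only [hxu, dif_pos h, Units.val_mul, Units.val_inv_eq_inv_val, Units.val_mk0]
  -- values of invariant monomials agree
  have keyA : ∀ m : (G →* Kˣ) →₀ ℕ, m.prod (fun ψ k => ψ ^ k) = 1 →
      (∀ ψ : G →* Kˣ, ψ ∉ I → m ψ = 0) → (m.sum fun _ k => k) ≤ d →
      m.prod (fun ψ k => (E ψ).mulVec v' (i0 ψ) ^ k)
        = m.prod (fun ψ k => (E ψ).mulVec w' (i0 ψ) ^ k) := by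
    intro m hm1 hm2 hm3
    by_cases hm0 : m = 0
    · subst hm0; simp
    · obtain ⟨χ0, hχ0⟩ := Finset.Nonempty.exists_mem (Finsupp.support_nonempty_iff.mpr hm0)
      have hmχ0 : m χ0 ≠ 0 := Finsupp.mem_support_iff.mp hχ0
      have hcharm : χ0 * (m - Finsupp.single χ0 1).prod (fun ψ k => ψ ^ k) = 1 := by
        have h2 := SepAux.finsupp_split_prod m χ0 hmχ0 (fun ψ k => ψ ^ k)
          (fun a => pow_zero a) (fun a k l => pow_add a k l)
        rw [hm1] at h2
        have h3 : ((m - Finsupp.single χ0 1).prod fun ψ k => ψ ^ k) * χ0 = 1 := by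
          simpa [show χ0 ^ 1 = χ0 by ext g; simp] using h2.symm
        exact (mul_comm χ0 _).trans h3
      have hlenm : ((m - Finsupp.single χ0 1).sum fun _ k => k) + 1 ≤ d := by
        have := SepAux.finsupp_split_sum m χ0 hmχ0
        omega
      have hk := SepAuxD.key1 Mh v' w' heqK χ0 (i0 χ0) (m - Finsupp.single χ0 1) i0
        hcharm hlenm
      have hsplv := SepAux.finsupp_split_prod m χ0 hmχ0
        (fun ψ k => (E ψ).mulVec v' (i0 ψ) ^ k) (fun a => pow_zero _)
        (fun a k l => pow_add _ k l)
      have hsplw := SepAux.finsupp_split_prod m χ0 hmχ0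
        (fun ψ k => (E ψ).mulVec w' (i0 ψ) ^ k) (fun a => pow_zero _)
        (fun a k l => pow_add _ k l)
      rw [hsplv, hsplw]
      simp only [pow_one]
      linear_combination hk
  -- membership in the support set
  have hmemI : ∀ (m : (G →* Kˣ) →₀ ℕ), (∀ ψ : G →* Kˣ, ψ ∉ I → m ψ = 0) →
      ∀ ψ ∈ m.support, ψ ∈ I := by
    intro m hm2 ψ hψ
    by_contra hc
    exact (Finsupp.mem_support_iff.mp hψ) (hm2 ψ hc)
  have hprodv_ne : ∀ (m : (G →* Kˣ) →₀ ℕ), (∀ ψ : G →* Kˣ, ψ ∉ I → m ψ = 0) →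
      m.prod (fun ψ k => (E ψ).mulVec v' (i0 ψ) ^ k) ≠ 0 := by
    intro m hm2
    rw [Finsupp.prod]
    refine Finset.prod_ne_zero_iff.mpr fun ψ hψ => ?_
    exact pow_ne_zero _ ((hdata ψ (hmemI m hm2 ψ hψ)).1)
  -- all product-one sequences supported on I give trivial ratio products
  have hall : ∀ s : (G →* Kˣ) →₀ ℕ, s.prod (fun ψ k => ψ ^ k) = 1 →
      (∀ ψ : G →* Kˣ, ψ ∉ I → s ψ = 0) →
      s.prod (fun ψ k => xu ψ ^ k) = 1 := by
    intro s hs1 hs2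
    have hstabI : ∀ (γ : K ≃ₐ[F] K) (ψ : G →* Kˣ), ψ ∈ I → galChar γ ψ ∈ I := hstab v
    have hspan := hcond I hstabI s hs1 hs2
    set L := Finsupp.linearCombination ℤ (fun χ : G →* Kˣ => Additive.ofMul (xu χ)) with hL
    have hLcalc : ∀ m : (G →* Kˣ) →₀ ℕ,
        L (natToZ m) = Additive.ofMul (m.prod fun ψ k => xu ψ ^ k) := by
      intro m
      rw [hL, Finsupp.linearCombination_apply, natToZ,
        Finsupp.sum_mapRange_index (fun a => zero_smul ℤ (Additive.ofMul (xu a)))]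
      rw [Finsupp.prod, Finsupp.sum]
      rw [ofMul_prod]
      refine Finset.sum_congr rfl fun ψ _ => ?_
      rw [← ofMul_zpow, zpow_natCast]
    have hgen : ∀ m : (G →* Kˣ) →₀ ℕ, m.prod (fun ψ k => ψ ^ k) = 1 →
        (∀ ψ : G →* Kˣ, ψ ∉ I → m ψ = 0) → (m.sum fun _ k => k) ≤ d →
        m.prod (fun ψ k => xu ψ ^ k) = 1 := by
      intro m hm1 hm2 hm3
      have hv_ne := hprodv_ne m hm2
      apply Units.ext
      show (Units.coeHom K) (m.prod fun ψ k => xu ψ ^ k) = 1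
      rw [map_finsuppProd (Units.coeHom K)]
      simp only [map_pow]
      have hcongr : (m.prod fun ψ k => ((Units.coeHom K) (xu ψ)) ^ k)
          = m.prod fun ψ k =>
              ((E ψ).mulVec w' (i0 ψ) * ((E ψ).mulVec v' (i0 ψ))⁻¹) ^ k := by
        refine Finsupp.prod_congr fun ψ hψ => ?_
        rw [show ((Units.coeHom K) (xu ψ)) = (xu ψ : K) from rfl,
          hxuval ψ (hmemI m hm2 ψ hψ)]
      rw [hcongr]
      have hsplit2 : m.prod (fun ψ k =>
          ((E ψ).mulVec w' (i0 ψ) * ((E ψ).mulVec v' (i0 ψ))⁻¹) ^ k)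
          = (m.prod fun ψ k => (E ψ).mulVec w' (i0 ψ) ^ k)
            * (m.prod fun ψ k => (E ψ).mulVec v' (i0 ψ) ^ k)⁻¹ := by
        rw [Finsupp.prod, Finsupp.prod, Finsupp.prod, ← Finset.prod_inv_distrib,
          ← Finset.prod_mul_distrib]
        refine Finset.prod_congr rfl fun ψ _ => ?_
        rw [mul_pow, inv_pow]
      rw [hsplit2, ← keyA m hm1 hm2 hm3, mul_inv_cancel₀ hv_ne]
    have hle : Submodule.span ℤ (natToZ '' {m : (G →* Kˣ) →₀ ℕ |
        m.prod (fun ψ k => ψ ^ k) = 1 ∧ (∀ ψ : G →* Kˣ, ψ ∉ I → m ψ = 0) ∧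
        m.sum (fun _ k => k) ≤ d}) ≤ LinearMap.ker L := by
      refine Submodule.span_le.mpr ?_
      rintro z ⟨m, ⟨hm1, hm2, hm3⟩, rfl⟩
      rw [SetLike.mem_coe, LinearMap.mem_ker, hLcalc, hgen m hm1 hm2 hm3]
      rfl
    have hmem := hle hspan
    rw [LinearMap.mem_ker, hLcalc] at hmem
    have := congrArg Additive.toMul hmem
    simpa using this
  -- the ratios are roots of unity
  have hsingle_mem : ∀ (χ : G →* Kˣ), χ ∈ I →
      (∀ ψ : G →* Kˣ, ψ ∉ I → (Finsupp.single χ (Monoid.exponent G)) ψ = 0) := by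
    intro χ hχ ψ hψ
    rw [Finsupp.single_apply, if_neg]
    intro hc; exact hψ (hc ▸ hχ)
  have hsingle_prod : ∀ (χ : G →* Kˣ),
      (Finsupp.single χ (Monoid.exponent G)).prod (fun ψ k => ψ ^ k) = 1 := by
    intro χ
    rw [Finsupp.prod_single_index (pow_zero χ)]
    exact hcharpow χ
  have hxue : ∀ (χ : G →* Kˣ), χ ∈ I → xu χ ^ Monoid.exponent G = 1 := by
    intro χ hχ
    have h9 := hall (Finsupp.single χ (Monoid.exponent G)) (hsingle_prod χ) (hsingle_mem χ hχ)
    rw [Finsupp.prod_single_index] at h9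
    · exact h9
    · exact pow_zero (xu χ)
  -- the cyclic group generated by ωu
  haveI hCufin : Finite (Subgroup.zpowers ωu) :=
    ((orderOf_pos_iff.mp (hordωu ▸ hepos)).finite_zpowers).to_subtype
  have hCue : ∀ c : Subgroup.zpowers ωu, c ^ Monoid.exponent G = 1 := by
    intro c
    obtain ⟨k, hk⟩ := Subgroup.mem_zpowers_iff.mp c.2
    apply Subtype.ext
    rw [SubmonoidClass.coe_pow, OneMemClass.coe_one, ← hk]
    calc (ωu ^ k) ^ Monoid.exponent G = (ωu ^ k) ^ ((Monoid.exponent G : ℤ)) := by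
          rw [zpow_natCast]
      _ = (ωu ^ ((Monoid.exponent G : ℤ))) ^ k := by
          rw [← zpow_mul, mul_comm, zpow_mul]
      _ = 1 := by rw [zpow_natCast, hωue, one_zpow]
  have hχmem : ∀ (χ : G →* Kˣ) (g : G), χ g ∈ Subgroup.zpowers ωu :=
    fun χ g => hroot _ (hvalpow χ g)
  haveI : Fintype {χ : G →* Kˣ // χ ∈ I} := Fintype.ofFinite _
  set Φ : G →* ({χ : G →* Kˣ // χ ∈ I} → Subgroup.zpowers ωu) :=
    Pi.monoidHom (fun χ => MonoidHom.codRestrict χ.1 (Subgroup.zpowers ωu)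
      (fun g => hχmem χ.1 g)) with hΦ
  have hΦval : ∀ (g : G) (χ : {χ : G →* Kˣ // χ ∈ I}), ((Φ g χ : Kˣ)) = χ.1 g := by
    intro g χ; rfl
  set τT : {χ : G →* Kˣ // χ ∈ I} → Subgroup.zpowers ωu :=
    fun χ => ⟨xu χ.1, hroot _ (hxue χ.1 χ.2)⟩ with hτT
  have hτrange : τT ∈ Φ.range := by
    by_contra hτ
    set H := Φ.range with hH
    haveI : Finite (({χ : G →* Kˣ // χ ∈ I} → Subgroup.zpowers ωu) ⧸ H) :=
      Quotient.finite _
    have hexpQ : Monoid.exponent (({χ : G →* Kˣ // χ ∈ I} → Subgroup.zpowers ωu) ⧸ H)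
        ∣ Monoid.exponent G := by
      refine Monoid.exponent_dvd_of_forall_pow_eq_one fun q => ?_
      obtain ⟨t, rfl⟩ := QuotientGroup.mk'_surjective H q
      rw [← map_pow]
      have ht : t ^ Monoid.exponent G = 1 := by
        funext χ
        rw [Pi.pow_apply, hCue (t χ), Pi.one_apply]
      rw [ht, map_one]
    haveI : HasEnoughRootsOfUnity K
        (Monoid.exponent (({χ : G →* Kˣ // χ ∈ I} → Subgroup.zpowers ωu) ⧸ H)) :=
      HasEnoughRootsOfUnity.of_dvd K hexpQ
    have hq1 : (QuotientGroup.mk' H) τT ≠ 1 := by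
      intro hc
      exact hτ ((QuotientGroup.eq_one_iff τT).mp hc)
    obtain ⟨φq, hφq⟩ := CommGroup.exists_apply_ne_one_of_hasEnoughRootsOfUnity
      (({χ : G →* Kˣ // χ ∈ I} → Subgroup.zpowers ωu) ⧸ H) K hq1
    set ξ : ({χ : G →* Kˣ // χ ∈ I} → Subgroup.zpowers ωu) →* Kˣ :=
      φq.comp (QuotientGroup.mk' H) with hξ
    have hξH : ∀ g : G, ξ (Φ g) = 1 := by
      intro g
      rw [hξ, MonoidHom.comp_apply]
      have h1 : (QuotientGroup.mk' H) (Φ g) = 1 :=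
        (QuotientGroup.eq_one_iff (Φ g)).mpr ⟨g, rfl⟩
      rw [h1, map_one]
    have hξτ : ξ τT ≠ 1 := hφq
    -- each coordinate of ξ is a power map
    have hcoord : ∀ χ : {χ : G →* Kˣ // χ ∈ I}, ∃ a : ℕ,
        ∀ c : Subgroup.zpowers ωu, ξ (Pi.mulSingle χ c) = (c : Kˣ) ^ a := by
      intro χ
      set ξχ : Subgroup.zpowers ωu →* Kˣ :=
        ξ.comp (MonoidHom.mulSingle (fun _ : {χ : G →* Kˣ // χ ∈ I} =>
          Subgroup.zpowers ωu) χ) with hξχ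
      set y := ξχ ⟨ωu, Subgroup.mem_zpowers ωu⟩ with hy
      have hye : y ^ Monoid.exponent G = 1 := by
        rw [hy, ← map_pow, hCue _, map_one]
      obtain ⟨a', ha'⟩ := Subgroup.mem_zpowers_iff.mp (hroot y hye)
      have honneg : ∃ a : ℕ, ωu ^ (a : ℤ) = y := by
        refine ⟨(a' % ((Monoid.exponent G : ℕ) : ℤ)).toNat, ?_⟩
        rw [Int.toNat_of_nonneg (Int.emod_nonneg a' (by exact_mod_cast hepos.ne'))]
        rw [← zpow_eq_zpow_emod' a' hωue]
        exact ha'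
      obtain ⟨a, ha⟩ := honneg
      refine ⟨a, fun c => ?_⟩
      obtain ⟨k, hk⟩ := Subgroup.mem_zpowers_iff.mp c.2
      have hc_eq : (⟨ωu, Subgroup.mem_zpowers ωu⟩ : Subgroup.zpowers ωu) ^ k = c :=
        Subtype.ext (by rw [SubgroupClass.coe_zpow]; exact hk)
      have h3 : ξ (Pi.mulSingle χ c) = y ^ k := by
        rw [show ξ (Pi.mulSingle χ c) = ξχ c from rfl, ← hc_eq, map_zpow, ← hy]
      rw [h3, ← ha, ← zpow_mul, mul_comm (a : ℤ) k, zpow_mul, zpow_natCast, hk]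
    choose a ha using hcoord
    have hξeval : ∀ t : {χ : G →* Kˣ // χ ∈ I} → Subgroup.zpowers ωu,
        ξ t = ∏ χ, ((t χ : Kˣ)) ^ a χ := by
      intro t
      conv_lhs => rw [← Finset.univ_prod_mulSingle t]
      rw [map_prod]
      exact Finset.prod_congr rfl fun χ _ => ha χ (t χ)
    set s : (G →* Kˣ) →₀ ℕ :=
      ∑ χ : {χ : G →* Kˣ // χ ∈ I}, Finsupp.single χ.1 (a χ) with hs
    have hsrestr : ∀ ψ : G →* Kˣ, ψ ∉ I → s ψ = 0 := by
      intro ψ hψ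
      rw [hs, Finsupp.finset_sum_apply]
      refine Finset.sum_eq_zero fun χ _ => ?_
      rw [Finsupp.single_apply, if_neg]
      intro hc; exact hψ (hc ▸ χ.2)
    have hsprod_char : s.prod (fun ψ k => ψ ^ k)
        = ∏ χ : {χ : G →* Kˣ // χ ∈ I}, χ.1 ^ a χ := by
      rw [hs, ← Finsupp.prod_finset_sum_index (fun b => pow_zero b)
        (fun b k l => pow_add b k l)]
      exact Finset.prod_congr rfl fun χ _ => Finsupp.prod_single_index (pow_zero _)
    have hsprod_xu : s.prod (fun ψ k => xu ψ ^ k)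
        = ∏ χ : {χ : G →* Kˣ // χ ∈ I}, xu χ.1 ^ a χ := by
      rw [hs, ← Finsupp.prod_finset_sum_index (fun b => pow_zero (xu b))
        (fun b k l => pow_add (xu b) k l)]
      exact Finset.prod_congr rfl fun χ _ => Finsupp.prod_single_index (pow_zero _)
    have hs1 : s.prod (fun ψ k => ψ ^ k) = 1 := by
      rw [hsprod_char]
      ext g
      have h1 : (SepAux.evalAt (K := K) g) (∏ χ : {χ : G →* Kˣ // χ ∈ I}, χ.1 ^ a χ)
          = 1 := by
        rw [map_prod]
        simp only [SepAux.evalAt, MonoidHom.coe_mk, OneHom.coe_mk, MonoidHom.pow_apply]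
        have h2 := hξH g
        rw [hξeval] at h2
        calc ∏ χ : {χ : G →* Kˣ // χ ∈ I}, (SepAux.evalAt (K := K) g χ.1) ^ a χ
            = ∏ χ : {χ : G →* Kˣ // χ ∈ I}, ((Φ g χ : Kˣ)) ^ a χ :=
              Finset.prod_congr rfl fun χ _ => by rw [hΦval]; rfl
          _ = 1 := h2
      exact congrArg Units.val h1
    have hfin := hall s hs1 hsrestr
    apply hξτ
    rw [hξeval]
    calc ∏ χ : {χ : G →* Kˣ // χ ∈ I}, ((τT χ : Kˣ)) ^ a χ
        = s.prod (fun ψ k => xu ψ ^ k) := by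
          rw [hsprod_xu]
      _ = 1 := hfin
  obtain ⟨g, hg⟩ := hτrange
  -- the group element g maps v to w
  have hcomp : ∀ χ : G →* Kˣ, ((χ g : K)) • (E χ).mulVec v' = (E χ).mulVec w' := by
    intro χ
    by_cases h : χ ∈ I
    · funext r
      have hval : (χ g : K) = (xu χ : K) := by
        have h1 := congrFun hg ⟨χ, h⟩
        have h2 := congrArg (fun c : Subgroup.zpowers ωu => ((c : Kˣ) : K)) h1
        exact h2
      rw [Pi.smul_apply, smul_eq_mul, hval, hxuval χ h]
      obtain ⟨h1, h2, h3⟩ := hdata χ h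
      have h4 := h3 r
      field_simp
      linear_combination -h4
    · have hv0 : (E χ).mulVec v' = 0 := by
        by_contra hc; exact h hc
      have hw0 : (E χ).mulVec w' = 0 := by
        by_contra hc
        obtain ⟨j0, hj1, hj2, _⟩ := stepw χ hc
        exact h (fun hh => hj2 (by rw [hh]; rfl))
      rw [hv0, hw0, smul_zero]
  have hfinal : (Mh g).mulVec v' = w' := by
    have h1 : Mh g = Mh g * ∑ χ : G →* Kˣ, E χ := by rw [hsumE, mul_one]
    rw [h1, Matrix.mul_sum, SepAux.sum_mulVec]
    have h2 : ∀ χ : G →* Kˣ, (Mh g * E χ).mulVec v' = (E χ).mulVec w' := by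
      intro χ
      rw [hE, SepAuxB.mul_projE, Matrix.smul_mulVec]
      exact hcomp χ
    rw [Finset.sum_congr rfl fun χ _ => h2 χ, ← SepAux.sum_mulVec, hsumE]
    exact Matrix.one_mulVec w'
  apply hno
  refine ⟨g, ?_⟩
  funext r
  apply halginj
  have h5 := congrFun hfinal r
  have h6 : (Mh g).mulVec v' r = algebraMap F K ((ρ g).mulVec v r) := by
    rw [hMhg]
    exact congrFun (SepAux.mulVec_map (algebraMap F K) (ρ g) v) r
  rw [← h6, h5]
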